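/- Let q : ℝ → ℂ be any function, let k ∈ ℂ, and let v₁, v₂ : ℝ → ℂ be differentiable functions satisfying the AKNS scattering system with reverse space-time Sinh-Gordon symmetry reduction, i.e. for all x ∈ ℝ: v₁'(x) = -i k v₁(x) + q(x) v₂(x) and v₂'(x) = q(-x) v₁(x) + i k v₂(x). Then the functions w₁(x) := v₂(-x) and w₂(x) := -v₁(-x) solve the same system: for all x ∈ ℝ, w₁'(x) = -i k w₁(x) + q(x) w₂(x) and w₂'(x) = q(-x) w₁(x) + i k w₂(x). -/

import Mathlib

lemma deriv_comp_neg' (f : ℝ → ℂ) (hf : Differentiable ℝ f) (x : ℝ) :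
    deriv (fun y => f (-y)) x = -deriv f (-x) := by
  have h := ((hf (-x)).hasDerivAt.scomp x (hasDerivAt_neg x)).deriv
  simpa [Function.comp_def] using h

/-- If `(v₁, v₂)` solves the AKNS scattering problem with the reverse space-time
Sinh-Gordon symmetry reduction `r(x) = q(-x)`, then `(w₁, w₂) = (v₂(-·), -v₁(-·))`
solves the same system. -/
theorem akns_sinhGordon_symmetry (q : ℝ → ℂ) (k : ℂ) (v₁ v₂ : ℝ → ℂ)
    (hv₁ : Differentiable ℝ v₁) (hv₂ : Differentiable ℝ v₂)
    (h₁ : ∀ x : ℝ, deriv v₁ x = -Complex.I * k * v₁ x + q x * v₂ x)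
    (h₂ : ∀ x : ℝ, deriv v₂ x = q (-x) * v₁ x + Complex.I * k * v₂ x)
    (w₁ w₂ : ℝ → ℂ)
    (hw₁ : ∀ x : ℝ, w₁ x = v₂ (-x))
    (hw₂ : ∀ x : ℝ, w₂ x = -v₁ (-x)) :
    (∀ x : ℝ, deriv w₁ x = -Complex.I * k * w₁ x + q x * w₂ x) ∧
    (∀ x : ℝ, deriv w₂ x = q (-x) * w₁ x + Complex.I * k * w₂ x) := by
  have hw₁' : w₁ = fun y => v₂ (-y) := funext hw₁
  have hw₂' : w₂ = fun y => -v₁ (-y) := funext hw₂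
  constructor <;> intro x
  · rw [hw₁', hw₂', deriv_comp_neg' v₂ hv₂, h₂ (-x)]
    simp
  · have hd : deriv w₂ x = deriv v₁ (-x) := by
      rw [hw₂', deriv.fun_neg, deriv_comp_neg' v₁ hv₁]; ring
    rw [hd, h₁ (-x), hw₁ x, hw₂ x]
    ring
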